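/- Let G be a finite connected simple graph with a cut-vertex x such that G − x has exactly two connected components C₁ and C₂, let v₁ be a universal vertex of C₁ such that v₁x is an edge of G that is a bridge of G, and suppose the degree of x in G is at least 3. Then G is not 2-γ'MB-critical. -/

import Mathlib

/-- `D` is a dominating set of `G`: every vertex not in `D` has a neighbor in `D`. -/
def Dominating {V : Type*} (G : SimpleGraph V) (D : Set V) : Prop :=
  ∀ v, v ∉ D → ∃ d ∈ D, G.Adj d v

/-- Dominator wins the S-game on `G` within one move. -/
def WinsWithin1 {V : Type*} (G : SimpleGraph V) : Prop :=
  ∀ s₁ : V, ∃ d₁, d₁ ≠ s₁ ∧ Dominating G {d₁}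

/-- Dominator wins the S-game on `G` within two moves. -/
def WinsWithin2 {V : Type*} (G : SimpleGraph V) : Prop :=
  ∀ s₁ : V, ∃ d₁, d₁ ≠ s₁ ∧
    (Dominating G {d₁} ∨
      ∀ s₂, s₂ ∉ ({s₁, d₁} : Set V) →
        ∃ d₂, d₂ ∉ ({s₁, d₁, s₂} : Set V) ∧ Dominating G {d₁, d₂})

/-- `γ'MB(G) = 2`: Dominator wins the S-game within two moves but not within one. -/
def MBPrimeEqTwo {V : Type*} (G : SimpleGraph V) : Prop :=
  WinsWithin2 G ∧ ¬ WinsWithin1 G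

/-- `G` is `2`-`γ'MB`-critical: `γ'MB(G) = 2` and for every edge `e`, Dominator does not
win the S-game on `G - e` within two moves. -/
def Critical2 {V : Type*} (G : SimpleGraph V) : Prop :=
  MBPrimeEqTwo G ∧ ∀ u v : V, G.Adj u v → ¬ WinsWithin2 (G.deleteEdges {s(u, v)})

/-- `v` is a universal vertex of the subgraph of `G` induced on `C`:
`v ∈ C` and `v` is adjacent in `G` to every other vertex of `C`. -/
def UnivIn {V : Type*} (G : SimpleGraph V) (C : Set V) (v : V) : Prop :=
  v ∈ C ∧ ∀ u ∈ C, u ≠ v → G.Adj v u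

/-- `G - x` has exactly two connected components, with vertex sets `C₁` and `C₂`. -/
def IsTwoComponents {V : Type*} (G : SimpleGraph V) (x : V) (C₁ C₂ : Set V) : Prop :=
  C₁.Nonempty ∧ C₂.Nonempty ∧ Disjoint C₁ C₂ ∧ C₁ ∪ C₂ = {x}ᶜ ∧
    (G.induce C₁).Connected ∧ (G.induce C₂).Connected ∧
    ∀ u ∈ C₁, ∀ v ∈ C₂, ¬ G.Adj u v

section Helpers
variable {V : Type*}

lemma dom_comm {H : SimpleGraph V} {a b : V} (h : Dominating H {a, b}) :
    Dominating H {b, a} := by rwa [Set.pair_comm]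

lemma two_partner_win (H : SimpleGraph V) {s₁ d₁ p q : V}
    (hpq : p ≠ q) (hp1 : p ≠ s₁) (hp2 : p ≠ d₁) (hq1 : q ≠ s₁) (hq2 : q ≠ d₁)
    (hdp : Dominating H {d₁, p}) (hdq : Dominating H {d₁, q}) :
    ∀ s₂ ∉ ({s₁, d₁} : Set V), ∃ d₂ ∉ ({s₁, d₁, s₂} : Set V), Dominating H {d₁, d₂} := by
  intro s₂ _
  by_cases h : s₂ = p
  · refine ⟨q, ?_, hdq⟩
    simp only [Set.mem_insert_iff, Set.mem_singleton_iff]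
    push_neg
    exact ⟨hq1, hq2, h ▸ hpq.symm⟩
  · refine ⟨p, ?_, hdp⟩
    simp only [Set.mem_insert_iff, Set.mem_singleton_iff]
    push_neg
    exact ⟨hp1, hp2, fun hh => h hh.symm⟩

lemma extract_partners (H : SimpleGraph V) {s₁ d₁ s₀ : V}
    (h : ∀ s₂ ∉ ({s₁, d₁} : Set V), ∃ d₂ ∉ ({s₁, d₁, s₂} : Set V), Dominating H {d₁, d₂})
    (h1 : s₀ ≠ s₁) (h2 : s₀ ≠ d₁) :
    ∃ p q, p ≠ q ∧ p ≠ s₁ ∧ p ≠ d₁ ∧ q ≠ s₁ ∧ q ≠ d₁ ∧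
      Dominating H {d₁, p} ∧ Dominating H {d₁, q} := by
  obtain ⟨p, hp, hDp⟩ := h s₀ (by simp [h1, h2])
  simp only [Set.mem_insert_iff, Set.mem_singleton_iff] at hp
  push_neg at hp
  obtain ⟨hp1, hp2, _⟩ := hp
  obtain ⟨q, hq, hDq⟩ := h p (by simp [hp1, hp2])
  simp only [Set.mem_insert_iff, Set.mem_singleton_iff] at hq
  push_neg at hq
  obtain ⟨hq1, hq2, hq3⟩ := hq
  exact ⟨p, q, fun hh => hq3 hh.symm, hp1, hp2, hq1, hq2, hDp, hDq⟩

lemma adj_del {G : SimpleGraph V} {u v a c : V} (h : G.Adj a c)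
    (h1 : a ≠ u ∨ c ≠ v) (h2 : a ≠ v ∨ c ≠ u) : (G.deleteEdges {s(u, v)}).Adj a c := by
  rw [SimpleGraph.deleteEdges_adj]
  refine ⟨h, ?_⟩
  simp only [Set.mem_singleton_iff, Sym2.eq_iff]
  tauto

end Helpers

/-- `z` is a useful second move: either `z` dominates `C₂` and is adjacent to `x`,
or `z = x` and `x` is adjacent to all of `C₂`. -/
def Zelt {V : Type*} (G : SimpleGraph V) (C₂ : Set V) (x z : V) : Prop :=
  (UnivIn G C₂ z ∧ G.Adj x z) ∨ (z = x ∧ ∀ c ∈ C₂, G.Adj x c)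

theorem stmt10 {V : Type*} [Fintype V] (G : SimpleGraph V) (hconn : G.Connected)
    (x : V) (C₁ C₂ : Set V) (hcomp : IsTwoComponents G x C₁ C₂)
    (v₁ : V) (hv₁ : UnivIn G C₁ v₁)
    (hadj : G.Adj v₁ x) (hbridge : G.IsBridge s(v₁, x))
    (hdeg : 3 ≤ (G.neighborSet x).ncard) :
    ¬ Critical2 G := by
  rintro ⟨⟨hw2, _hw1⟩, hcr⟩
  obtain ⟨hC1ne, hC2ne, hdisj, hunion, _hc1, _hc2, hcross⟩ := hcomp
  obtain ⟨hv₁C, hv₁u⟩ := hv₁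
  -- basic membership facts
  have hmem : ∀ y, y ≠ x → y ∈ C₁ ∨ y ∈ C₂ := by
    intro y hy
    have : y ∈ C₁ ∪ C₂ := by rw [hunion]; simp [hy]
    exact this
  have hxC1 : x ∉ C₁ := by
    intro h
    have : x ∈ C₁ ∪ C₂ := Or.inl h
    rw [hunion] at this; simp at this
  have hxC2 : x ∉ C₂ := by
    intro h
    have : x ∈ C₁ ∪ C₂ := Or.inr h
    rw [hunion] at this; simp at this
  have hd12 : ∀ {y : V}, y ∈ C₁ → y ∉ C₂ := fun h => Set.disjoint_left.mp hdisj h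
  have hne12 : ∀ {a b : V}, a ∈ C₁ → b ∈ C₂ → a ≠ b := by
    intro a b ha hb h; exact hd12 ha (h ▸ hb)
  have hC1x : ∀ {y : V}, y ∈ C₁ → y ≠ x := fun h hh => hxC1 (hh ▸ h)
  have hC2x : ∀ {y : V}, y ∈ C₂ → y ≠ x := fun h hh => hxC2 (hh ▸ h)
  have hv₁x : v₁ ≠ x := hadj.ne
  -- F1 : the only neighbor of x in C₁ is v₁
  have hF1 : ∀ u ∈ C₁, G.Adj x u → u = v₁ := by
    intro u hu hxu
    by_contra hne
    rw [SimpleGraph.isBridge_iff] at hbridge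
    apply hbridge
    have h1 : (G \ SimpleGraph.fromEdgeSet {s(v₁, x)}).Adj v₁ u := by
      have := adj_del (G := G) (u := v₁) (v := x) (hv₁u u hu hne) (Or.inr (hC1x hu))
        (Or.inl hv₁x)
      rwa [SimpleGraph.deleteEdges] at this
    have h2 : (G \ SimpleGraph.fromEdgeSet {s(v₁, x)}).Adj u x := by
      have := adj_del (G := G) (u := v₁) (v := x) hxu.symm
        (Or.inl (fun hh => hne hh)) (Or.inr (fun hh => hv₁x hh.symm))
      rwa [SimpleGraph.deleteEdges] at this
    exact h1.reachable.trans h2.reachable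
  -- neighbors of C₁ vertices lie in C₁ ∪ {x}, similarly C₂
  have hNu : ∀ u ∈ C₁, ∀ y, G.Adj y u → y ∈ C₁ ∨ y = x := by
    intro u hu y hy
    by_cases h : y = x
    · exact Or.inr h
    · rcases hmem y h with h1 | h1
      · exact Or.inl h1
      · exact absurd hy.symm (hcross u hu y h1)
  have hNc : ∀ c ∈ C₂, ∀ y, G.Adj y c → y ∈ C₂ ∨ y = x := by
    intro c hc y hy
    by_cases h : y = x
    · exact Or.inr h
    · rcases hmem y h with h1 | h1
      · exact absurd hy (hcross y h1 c hc)
      · exact Or.inl h1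
  -- two neighbors of x in C₂
  have hW : ∃ w₁ w₂, (w₁ ∈ C₂ ∧ G.Adj x w₁) ∧ (w₂ ∈ C₂ ∧ G.Adj x w₂) ∧ w₁ ≠ w₂ := by
    have hsub : G.neighborSet x ⊆ insert v₁ (G.neighborSet x ∩ C₂) := by
      intro y hy
      have hyx : G.Adj x y := hy
      rcases hmem y hyx.ne' with h1 | h1
      · exact Or.inl (hF1 y h1 hyx)
      · exact Or.inr ⟨hy, h1⟩
    have h1 : 3 ≤ (insert v₁ (G.neighborSet x ∩ C₂)).ncard :=
      le_trans hdeg (Set.ncard_le_ncard hsub (Set.toFinite _))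
    have h2 : (insert v₁ (G.neighborSet x ∩ C₂)).ncard ≤
        (G.neighborSet x ∩ C₂).ncard + 1 := Set.ncard_insert_le _ _
    have h3 : 1 < (G.neighborSet x ∩ C₂).ncard := by omega
    rw [Set.one_lt_ncard_iff (Set.toFinite _)] at h3
    obtain ⟨a, b, ⟨ha1, ha2⟩, ⟨hb1, hb2⟩, hab⟩ := h3
    exact ⟨a, b, ⟨ha2, ha1⟩, ⟨hb2, hb1⟩, hab⟩
  obtain ⟨w₁, w₂, ⟨hw₁C, hw₁a⟩, ⟨hw₂C, hw₂a⟩, hww⟩ := hW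
  -- a dominating singleton must be x
  have hsingle : ∀ d, Dominating G {d} → d = x := by
    intro d hd
    obtain ⟨u₀, hu₀⟩ := hC1ne
    obtain ⟨c₀, hc₀⟩ := hC2ne
    have h1 : d ∈ C₁ ∨ d = x := by
      by_cases h : u₀ = d
      · exact Or.inl (h ▸ hu₀)
      · obtain ⟨d', hd', hadj'⟩ := hd u₀ (by simp [h])
        rw [Set.mem_singleton_iff] at hd'
        subst hd'
        exact hNu u₀ hu₀ d' hadj'
    have h2 : d ∈ C₂ ∨ d = x := by
      by_cases h : c₀ = d
      · exact Or.inl (h ▸ hc₀)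
      · obtain ⟨d', hd', hadj'⟩ := hd c₀ (by simp [h])
        rw [Set.mem_singleton_iff] at hd'
        subst hd'
        exact hNc c₀ hc₀ d' hadj'
    rcases h1 with h1 | h1
    · rcases h2 with h2 | h2
      · exact absurd h2 (hd12 h1)
      · exact h2
    · exact h1
  -- main case split on whether C₁ = {v₁}
  by_cases hbig : ∃ u, u ∈ C₁ ∧ u ≠ v₁
  · -- CASE BIG : C₁ has a vertex other than v₁
    obtain ⟨u₁, hu₁C, hu₁v⟩ := hbig
    have hxu₁ : ¬ G.Adj x u₁ := fun h => hu₁v (hF1 u₁ hu₁C h)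
    have hnos : ∀ d, ¬ Dominating G {d} := by
      intro d hd
      have hdx := hsingle d hd
      subst hdx
      obtain ⟨d', hd', hadj'⟩ := hd u₁ (by
        simp only [Set.mem_singleton_iff]; exact hC1x hu₁C)
      rw [Set.mem_singleton_iff] at hd'
      subst hd'
      exact hxu₁ hadj'
    -- full classification of dominating pairs
    have haux : ∀ a b, Dominating G {a, b} → a ∈ C₁ →
        (UnivIn G C₁ a ∧ UnivIn G C₂ b ∧ (a = v₁ ∨ G.Adj x b)) ∨
        (b = x ∧ UnivIn G C₁ a ∧ ∀ c ∈ C₂, G.Adj x c) := by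
      intro a b hD haC
      obtain ⟨c₀, hc₀⟩ := hC2ne
      have hb2 : b ∈ C₂ ∨ b = x := by
        by_cases h : c₀ = b
        · exact Or.inl (h ▸ hc₀)
        · obtain ⟨d, hd, hadj'⟩ := hD c₀ (by
            simp only [Set.mem_insert_iff, Set.mem_singleton_iff]
            push_neg
            exact ⟨(hne12 haC hc₀).symm, h⟩)
          simp only [Set.mem_insert_iff, Set.mem_singleton_iff] at hd
          rcases hd with rfl | rfl
          · exact absurd hadj' (hcross d haC c₀ hc₀)
          · exact hNc c₀ hc₀ d hadj'
      rcases hb2 with hbC | hbx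
      · refine Or.inl ⟨⟨haC, ?_⟩, ⟨hbC, ?_⟩, ?_⟩
        · intro u hu hua
          obtain ⟨d, hd, hadj'⟩ := hD u (by
            simp only [Set.mem_insert_iff, Set.mem_singleton_iff]
            push_neg
            exact ⟨hua, hne12 hu hbC⟩)
          simp only [Set.mem_insert_iff, Set.mem_singleton_iff] at hd
          rcases hd with rfl | rfl
          · exact hadj'
          · exact absurd hadj'.symm (hcross u hu d hbC)
        · intro c hc hcb
          obtain ⟨d, hd, hadj'⟩ := hD c (by
            simp only [Set.mem_insert_iff, Set.mem_singleton_iff]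
            push_neg
            exact ⟨(hne12 haC hc).symm, hcb⟩)
          simp only [Set.mem_insert_iff, Set.mem_singleton_iff] at hd
          rcases hd with rfl | rfl
          · exact absurd hadj' (hcross d haC c hc)
          · exact hadj'
        · obtain ⟨d, hd, hadj'⟩ := hD x (by
            simp only [Set.mem_insert_iff, Set.mem_singleton_iff]
            push_neg
            exact ⟨(hC1x haC).symm, (hC2x hbC).symm⟩)
          simp only [Set.mem_insert_iff, Set.mem_singleton_iff] at hd
          rcases hd with rfl | rfl
          · exact Or.inl (hF1 d haC hadj'.symm)
          · exact Or.inr hadj'.symm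
      · subst hbx
        refine Or.inr ⟨rfl, ⟨haC, ?_⟩, ?_⟩
        · intro u hu hua
          by_cases huv : u = v₁
          · subst huv
            exact (hv₁u a haC (fun h => hua h.symm)).symm
          · obtain ⟨d, hd, hadj'⟩ := hD u (by
              simp only [Set.mem_insert_iff, Set.mem_singleton_iff]
              push_neg
              exact ⟨hua, hC1x hu⟩)
            simp only [Set.mem_insert_iff, Set.mem_singleton_iff] at hd
            rcases hd with rfl | rfl
            · exact hadj'
            · exact absurd (hF1 u hu hadj') huv
        · intro c hc
          obtain ⟨d, hd, hadj'⟩ := hD c (by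
            simp only [Set.mem_insert_iff, Set.mem_singleton_iff]
            push_neg
            exact ⟨(hne12 haC hc).symm, hC2x hc⟩)
          simp only [Set.mem_insert_iff, Set.mem_singleton_iff] at hd
          rcases hd with rfl | rfl
          · exact absurd hadj' (hcross d haC c hc)
          · exact hadj'
    have hclassB : ∀ a b, Dominating G {a, b} →
        (UnivIn G C₁ a ∧ UnivIn G C₂ b ∧ (a = v₁ ∨ G.Adj x b)) ∨
        (UnivIn G C₁ b ∧ UnivIn G C₂ a ∧ (b = v₁ ∨ G.Adj x a)) ∨
        (b = x ∧ UnivIn G C₁ a ∧ ∀ c ∈ C₂, G.Adj x c) ∨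
        (a = x ∧ UnivIn G C₁ b ∧ ∀ c ∈ C₂, G.Adj x c) := by
      intro a b hD
      have hmem1 : a ∈ C₁ ∨ b ∈ C₁ := by
        by_cases h : u₁ = a
        · exact Or.inl (h ▸ hu₁C)
        · by_cases h' : u₁ = b
          · exact Or.inr (h' ▸ hu₁C)
          · obtain ⟨d, hd, hadj'⟩ := hD u₁ (by
              simp only [Set.mem_insert_iff, Set.mem_singleton_iff]
              push_neg
              exact ⟨h, h'⟩)
            simp only [Set.mem_insert_iff, Set.mem_singleton_iff] at hd
            rcases hNu u₁ hu₁C d hadj' with h1 | h1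
            · rcases hd with rfl | rfl
              · exact Or.inl h1
              · exact Or.inr h1
            · subst h1
              exact absurd hadj' hxu₁
      rcases hmem1 with h | h
      · rcases haux a b hD h with h1 | h1
        · exact Or.inl h1
        · exact Or.inr (Or.inr (Or.inl h1))
      · rcases haux b a (dom_comm hD) h with h1 | h1
        · exact Or.inr (Or.inl h1)
        · exact Or.inr (Or.inr (Or.inr h1))
    -- z ∈ C₂ or z = x for Zelt, and Zelt elements differ from C₁ vertices
    have hZne : ∀ z a, Zelt G C₂ x z → a ∈ C₁ → z ≠ a := by
      rintro z a (⟨⟨hzC, _⟩, _⟩ | ⟨rfl, _⟩) ha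
      · exact (hne12 ha hzC).symm
      · exact (hC1x ha).symm
    -- winning on G - v₁x when we have one extra universal vertex and two Zelt's
    have hH0win : ∀ a₀, UnivIn G C₁ a₀ → a₀ ≠ v₁ → ∀ z z', z ≠ z' →
        Zelt G C₂ x z → Zelt G C₂ x z' → False := by
      intro a₀ hIa₀ ha₀v z z' hzz' hz hz'
      apply hcr v₁ x hadj
      have hDz : ∀ a t, UnivIn G C₁ a → Zelt G C₂ x t →
          Dominating (G.deleteEdges {s(v₁, x)}) {a, t} := by
        intro a t ⟨haC, hau⟩ ht v hv
        simp only [Set.mem_insert_iff, Set.mem_singleton_iff] at hv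
        push_neg at hv
        obtain ⟨hv1, hv2⟩ := hv
        by_cases hvx : v = x
        · rcases ht with ⟨⟨htC, _⟩, hxt⟩ | ⟨htx, _⟩
          · refine ⟨t, Or.inr rfl, ?_⟩
            rw [hvx]
            exact adj_del hxt.symm (Or.inl (hne12 hv₁C htC).symm) (Or.inl (hC2x htC))
          · exact absurd (hvx.trans htx.symm) hv2
        · rcases hmem v hvx with h1 | h1
          · exact ⟨a, Or.inl rfl,
              adj_del (hau v h1 hv1) (Or.inr hvx) (Or.inl (hC1x haC))⟩
          · rcases ht with ⟨⟨htC, htu⟩, _⟩ | ⟨htx, hWf⟩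
            · exact ⟨t, Or.inr rfl,
                adj_del (htu v h1 hv2) (Or.inl (hne12 hv₁C htC).symm) (Or.inl (hC2x htC))⟩
            · refine ⟨t, Or.inr rfl, ?_⟩
              rw [htx]
              exact adj_del (hWf v h1) (Or.inl (fun h => hv₁x h.symm)) (Or.inr (hne12 hv₁C h1).symm)
      intro s₁
      by_cases hs1 : s₁ = z
      · have hz's : z' ≠ s₁ := fun hh => hzz' (hh.trans hs1).symm
        have hv₁s : v₁ ≠ s₁ := fun hh => (hZne z v₁ hz hv₁C) (hh.trans hs1).symm
        have ha₀s : a₀ ≠ s₁ := fun hh => (hZne z a₀ hz hIa₀.1) (hh.trans hs1).symm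
        refine ⟨z', hz's, Or.inr ?_⟩
        exact two_partner_win _ (Ne.symm ha₀v) hv₁s (hZne z' v₁ hz' hv₁C).symm
          ha₀s (hZne z' a₀ hz' hIa₀.1).symm
          (dom_comm (hDz v₁ z' ⟨hv₁C, hv₁u⟩ hz')) (dom_comm (hDz a₀ z' hIa₀ hz'))
      · by_cases hs2 : s₁ = z'
        · have hzs : z ≠ s₁ := fun hh => hs1 hh.symm
          have hv₁s : v₁ ≠ s₁ := fun hh => (hZne z' v₁ hz' hv₁C) (hh.trans hs2).symm
          have ha₀s : a₀ ≠ s₁ := fun hh => (hZne z' a₀ hz' hIa₀.1) (hh.trans hs2).symm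
          refine ⟨z, hzs, Or.inr ?_⟩
          exact two_partner_win _ (Ne.symm ha₀v) hv₁s (hZne z v₁ hz hv₁C).symm
            ha₀s (hZne z a₀ hz hIa₀.1).symm
            (dom_comm (hDz v₁ z ⟨hv₁C, hv₁u⟩ hz)) (dom_comm (hDz a₀ z hIa₀ hz))
        · by_cases hsv : s₁ = v₁
          · have has : a₀ ≠ s₁ := fun hh => ha₀v (hh.trans hsv)
            refine ⟨a₀, has, Or.inr ?_⟩
            exact two_partner_win _ hzz' (fun hh => hs1 hh.symm) (hZne z a₀ hz hIa₀.1)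
              (fun hh => hs2 hh.symm) (hZne z' a₀ hz' hIa₀.1)
              (hDz a₀ z hIa₀ hz) (hDz a₀ z' hIa₀ hz')
          · refine ⟨v₁, fun hh => hsv hh.symm, Or.inr ?_⟩
            exact two_partner_win _ hzz' (fun hh => hs1 hh.symm) (hZne z v₁ hz hv₁C)
              (fun hh => hs2 hh.symm) (hZne z' v₁ hz' hv₁C)
              (hDz v₁ z ⟨hv₁C, hv₁u⟩ hz) (hDz v₁ z' ⟨hv₁C, hv₁u⟩ hz')
    -- extraction at s₁ = v₁
    have hBout :
        (∃ a, (UnivIn G C₁ a ∧ a ≠ v₁) ∧ ∃ z z', z ≠ z' ∧ Zelt G C₂ x z ∧ Zelt G C₂ x z') ∨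
        (∃ a a', UnivIn G C₁ a ∧ a ≠ v₁ ∧ UnivIn G C₁ a' ∧ a' ≠ v₁ ∧ a ≠ a' ∧
          ∃ z, Zelt G C₂ x z) := by
      obtain ⟨d₁, hd₁, hor⟩ := hw2 v₁
      rcases hor with hsing | hgame
      · exact absurd hsing (hnos d₁)
      · have hs₀ : ∃ s₀, s₀ ≠ v₁ ∧ s₀ ≠ d₁ := by
          by_cases h : d₁ = w₁
          · exact ⟨w₂, (hne12 hv₁C hw₂C).symm, fun hh => hww (h ▸ hh).symm⟩
          · exact ⟨w₁, (hne12 hv₁C hw₁C).symm, fun hh => h hh.symm⟩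
        obtain ⟨s₀, hs₁0, hs₂0⟩ := hs₀
        obtain ⟨p, q, hpq, hp1, hp2, hq1, hq2, hDp, hDq⟩ := extract_partners G hgame hs₁0 hs₂0
        have step : ∀ r, r ≠ v₁ → Dominating G {d₁, r} →
            (UnivIn G C₁ d₁ ∧ Zelt G C₂ x r) ∨ (UnivIn G C₁ r ∧ Zelt G C₂ x d₁) := by
          intro r hrv hD
          rcases hclassB d₁ r hD with
            ⟨h1, h2, h3⟩ | ⟨h1, h2, h3⟩ | ⟨h1, h2, h3⟩ | ⟨h1, h2, h3⟩
          · rcases h3 with h3 | h3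
            · exact absurd h3 hd₁
            · exact Or.inl ⟨h1, Or.inl ⟨h2, h3⟩⟩
          · rcases h3 with h3 | h3
            · exact absurd h3 hrv
            · exact Or.inr ⟨h1, Or.inl ⟨h2, h3⟩⟩
          · exact Or.inl ⟨h2, Or.inr ⟨h1, h3⟩⟩
          · exact Or.inr ⟨h2, Or.inr ⟨h1, h3⟩⟩
        rcases step p hp1 hDp with ⟨hU1, hZp⟩ | ⟨hUp, hZd⟩
        · rcases step q hq1 hDq with ⟨_, hZq⟩ | ⟨_, hZd⟩
          · exact Or.inl ⟨d₁, ⟨hU1, hd₁⟩, p, q, hpq, hZp, hZq⟩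
          · exact absurd rfl (hZne d₁ d₁ hZd hU1.1)
        · rcases step q hq1 hDq with ⟨hU1, _⟩ | ⟨hUq, _⟩
          · exact absurd rfl (hZne d₁ d₁ hZd hU1.1)
          · exact Or.inr ⟨p, q, hUp, hp1, hUq, hq1, hpq, d₁, hZd⟩
    -- there is some vertex dominating C₂
    have hA' : ∃ b, UnivIn G C₂ b := by
      obtain ⟨d₁, hd₁, hor⟩ := hw2 x
      rcases hor with hsing | hgame
      · exact absurd hsing (hnos d₁)
      · have hs₀ : ∃ s₀, s₀ ≠ x ∧ s₀ ≠ d₁ := by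
          by_cases h : d₁ = w₁
          · exact ⟨w₂, hC2x hw₂C, fun hh => hww (h ▸ hh).symm⟩
          · exact ⟨w₁, hC2x hw₁C, fun hh => h hh.symm⟩
        obtain ⟨s₀, hs₁0, hs₂0⟩ := hs₀
        obtain ⟨p, q, hpq, hp1, hp2, hq1, hq2, hDp, hDq⟩ := extract_partners G hgame hs₁0 hs₂0
        rcases hclassB d₁ p hDp with
          ⟨_, h2, _⟩ | ⟨_, h2, _⟩ | ⟨h1, _, _⟩ | ⟨h1, _, _⟩
        · exact ⟨p, h2⟩
        · exact ⟨d₁, h2⟩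
        · exact absurd h1 hp1
        · exact absurd h1 hd₁
    -- resolve the cases
    rcases hBout with ⟨a, ⟨hIa, hav⟩, z, z', hzz', hz, hz'⟩ |
      ⟨a, a', hIa, hav, hIa', hav', haa', z, hz⟩
    · exact hH0win a hIa hav z z' hzz' hz hz'
    · by_cases hZ2 : ∃ z'', Zelt G C₂ x z'' ∧ z'' ≠ z
      · obtain ⟨z'', hz'', hzz⟩ := hZ2
        exact hH0win a hIa hav z'' z hzz hz'' hz
      · push_neg at hZ2
        rcases hz with ⟨hIz, hxz⟩ | ⟨hzx, hWf⟩
        · -- z = b₀ ∈ C₂ with Adj x z : extraction at s₁ = z then win on G - xw, w ≠ z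
          obtain ⟨d₁, hd₁, hor⟩ := hw2 z
          rcases hor with hsing | hgame
          · exact absurd hsing (hnos d₁)
          · have hs₀ : ∃ s₀, s₀ ≠ z ∧ s₀ ≠ d₁ := by
              by_cases h : d₁ = v₁
              · exact ⟨x, (hC2x hIz.1).symm, by rw [h]; exact fun hh => hv₁x hh.symm⟩
              · exact ⟨v₁, hne12 hv₁C hIz.1, fun hh => h hh.symm⟩
            obtain ⟨s₀, hs₁0, hs₂0⟩ := hs₀
            obtain ⟨p, q, hpq, hp1, hp2, hq1, hq2, hDp, hDq⟩ :=
              extract_partners G hgame hs₁0 hs₂0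
            have step2 : ∀ r, r ≠ z → Dominating G {d₁, r} →
                (d₁ = v₁ ∧ UnivIn G C₂ r) ∨ (r = v₁ ∧ UnivIn G C₂ d₁) := by
              intro r hrz hD
              rcases hclassB d₁ r hD with
                ⟨h1, h2, h3⟩ | ⟨h1, h2, h3⟩ | ⟨h1, h2, h3⟩ | ⟨h1, h2, h3⟩
              · rcases h3 with h3 | h3
                · exact Or.inl ⟨h3, h2⟩
                · exact absurd (hZ2 r (Or.inl ⟨h2, h3⟩)) hrz
              · rcases h3 with h3 | h3
                · exact Or.inr ⟨h3, h2⟩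
                · exact absurd (hZ2 d₁ (Or.inl ⟨h2, h3⟩)) hd₁
              · exact absurd (hZ2 x (Or.inr ⟨rfl, h3⟩)) (hC2x hIz.1).symm
              · exact absurd (hZ2 x (Or.inr ⟨rfl, h3⟩)) (hC2x hIz.1).symm
            have hfin : d₁ = v₁ ∧ UnivIn G C₂ p ∧ UnivIn G C₂ q := by
              rcases step2 p hp1 hDp with ⟨hd₁v, hBp⟩ | ⟨hpv, hBd⟩
              · rcases step2 q hq1 hDq with ⟨_, hBq⟩ | ⟨hqv, hBd⟩
                · exact ⟨hd₁v, hBp, hBq⟩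
                · exact absurd (hd₁v ▸ hBd.1) (hd12 hv₁C)
              · rcases step2 q hq1 hDq with ⟨hd₁v, _⟩ | ⟨hqv, _⟩
                · exact absurd (hd₁v ▸ hBd.1) (hd12 hv₁C)
                · exact absurd (hpv.trans hqv.symm) hpq
            obtain ⟨hd₁v, hBp, hBq⟩ := hfin
            -- pick w adjacent to x in C₂ with w ≠ z
            have hwpick : ∃ w, w ∈ C₂ ∧ G.Adj x w ∧ w ≠ z := by
              by_cases h : z = w₁
              · exact ⟨w₂, hw₂C, hw₂a, fun hh => hww (hh.trans h).symm⟩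
              · exact ⟨w₁, hw₁C, hw₁a, fun hh => h hh.symm⟩
            obtain ⟨w, hwC, hwa, hwz⟩ := hwpick
            apply hcr x w hwa
            have hHv : ∀ c, UnivIn G C₂ c →
                Dominating (G.deleteEdges {s(x, w)}) {v₁, c} := by
              intro c ⟨hcC, hcu⟩ v hv
              simp only [Set.mem_insert_iff, Set.mem_singleton_iff] at hv
              push_neg at hv
              obtain ⟨hv1, hv2⟩ := hv
              by_cases hvx : v = x
              · subst hvx
                exact ⟨v₁, Or.inl rfl,
                  adj_del hadj (Or.inl hv₁x) (Or.inl (hne12 hv₁C hwC))⟩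
              · rcases hmem v hvx with h1 | h1
                · exact ⟨v₁, Or.inl rfl,
                    adj_del (hv₁u v h1 hv1) (Or.inl hv₁x) (Or.inl (hne12 hv₁C hwC))⟩
                · exact ⟨c, Or.inr rfl,
                    adj_del (hcu v h1 hv2) (Or.inl (hC2x hcC)) (Or.inr hvx)⟩
            have hHz : ∀ a'', UnivIn G C₁ a'' →
                Dominating (G.deleteEdges {s(x, w)}) {a'', z} := by
              intro a'' ⟨haC, hau⟩ v hv
              simp only [Set.mem_insert_iff, Set.mem_singleton_iff] at hv
              push_neg at hv
              obtain ⟨hv1, hv2⟩ := hv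
              by_cases hvx : v = x
              · subst hvx
                exact ⟨z, Or.inr rfl,
                  adj_del hxz.symm (Or.inl (hC2x hIz.1)) (Or.inl hwz.symm)⟩
              · rcases hmem v hvx with h1 | h1
                · exact ⟨a'', Or.inl rfl,
                    adj_del (hau v h1 hv1) (Or.inl (hC1x haC)) (Or.inr hvx)⟩
                · exact ⟨z, Or.inr rfl,
                    adj_del (hIz.2 v h1 hv2) (Or.inl (hC2x hIz.1)) (Or.inr hvx)⟩
            intro s₁'
            by_cases hs1 : s₁' = v₁
            · have hzs : z ≠ s₁' := fun hh => (hne12 hv₁C hIz.1) (hh.trans hs1).symm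
              refine ⟨z, hzs, Or.inr ?_⟩
              exact two_partner_win _ haa' (fun hh => hav (hh.trans hs1))
                (hne12 hIa.1 hIz.1) (fun hh => hav' (hh.trans hs1))
                (hne12 hIa'.1 hIz.1) (dom_comm (hHz a hIa)) (dom_comm (hHz a' hIa'))
            · refine ⟨v₁, fun hh => hs1 hh.symm, Or.inr ?_⟩
              have hzInB : UnivIn G C₂ z := hIz
              by_cases hsp : s₁' = p
              · exact two_partner_win _ (fun hh => hq1 hh.symm : z ≠ q)
                  (fun hh => hp1 (hh.trans hsp).symm) (hne12 hv₁C hIz.1).symm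
                  (fun hh => hpq (hh.trans hsp).symm)
                  (hne12 hv₁C hBq.1).symm (hHv z hzInB) (hHv q hBq)
              · by_cases hsq : s₁' = q
                · exact two_partner_win _ (fun hh => hp1 hh.symm : z ≠ p)
                    (fun hh => hq1 (hh.trans hsq).symm) (hne12 hv₁C hIz.1).symm
                    (fun hh => hpq (hh.trans hsq))
                    (hne12 hv₁C hBp.1).symm (hHv z hzInB) (hHv p hBp)
                · exact two_partner_win _ hpq (fun hh => hsp hh.symm)
                    (hne12 hv₁C hBp.1).symm (fun hh => hsq hh.symm)
                    (hne12 hv₁C hBq.1).symm (hHv p hBp) (hHv q hBq)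
        · -- z = x with x adjacent to all of C₂ : contradiction
          obtain ⟨b, hIb⟩ := hA'
          exact hC2x hIb.1 ((hZ2 b (Or.inl ⟨hIb, hWf b hIb.1⟩)).trans hzx)
  · -- CASE SMALL : C₁ = {v₁}
    push_neg at hbig
    -- classification of dominating pairs avoiding x
    have haux : ∀ a b, Dominating G {a, b} → a = v₁ → b ≠ x → UnivIn G C₂ b := by
      intro a b hD ha hbx
      rw [ha] at hD
      have hbu : ∀ c ∈ C₂, c ≠ b → G.Adj b c := by
        intro c hc hcb
        obtain ⟨d, hd, hadj'⟩ := hD c (by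
          simp only [Set.mem_insert_iff, Set.mem_singleton_iff]
          push_neg
          exact ⟨(hne12 hv₁C hc).symm, hcb⟩)
        rcases hd with hd | hd
        · exact absurd (hd ▸ hadj') (hcross v₁ hv₁C c hc)
        · rw [Set.mem_singleton_iff] at hd
          exact hd ▸ hadj'
      have hbC : b ∈ C₂ := by
        obtain ⟨c₀, hc₀⟩ := hC2ne
        by_cases h : c₀ = b
        · exact h ▸ hc₀
        · rcases hNc c₀ hc₀ b (hbu c₀ hc₀ h) with h1 | h1
          · exact h1
          · exact absurd h1 hbx
      exact ⟨hbC, hbu⟩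
    have hclass : ∀ a b, Dominating G {a, b} → a ≠ x → b ≠ x → a ≠ b →
        (a = v₁ ∧ UnivIn G C₂ b) ∨ (b = v₁ ∧ UnivIn G C₂ a) := by
      intro a b hD hax hbx hab
      have hv₁mem : v₁ = a ∨ v₁ = b := by
        by_contra h
        push_neg at h
        obtain ⟨d, hd, hadj'⟩ := hD v₁ (by
          simp only [Set.mem_insert_iff, Set.mem_singleton_iff]; push_neg; exact h)
        have hdd : d = a ∨ d = b := by
          rcases hd with hd | hd
          · exact Or.inl hd
          · exact Or.inr hd
        rcases hNu v₁ hv₁C d hadj' with h1 | h1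
        · have := hbig d h1
          subst this
          exact hadj'.ne rfl
        · rcases hdd with rfl | rfl
          · exact hax h1
          · exact hbx h1
      rcases hv₁mem with h | h
      · exact Or.inl ⟨h.symm, haux a b hD h.symm hbx⟩
      · exact Or.inr ⟨h.symm, haux b a (dom_comm hD) h.symm hax⟩
    -- extraction at s₁ = x : two distinct vertices dominating C₂
    have hB2 : ∃ b b', UnivIn G C₂ b ∧ UnivIn G C₂ b' ∧ b ≠ b' := by
      obtain ⟨d₁, hd₁, hor⟩ := hw2 x
      rcases hor with hsing | hgame
      · exact absurd (hsingle d₁ hsing) hd₁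
      · have hs₀ : ∃ s₀, s₀ ≠ x ∧ s₀ ≠ d₁ := by
          by_cases h : d₁ = w₁
          · exact ⟨w₂, hC2x hw₂C, fun hh => hww (h ▸ hh).symm⟩
          · exact ⟨w₁, hC2x hw₁C, fun hh => h hh.symm⟩
        obtain ⟨s₀, hs₀1, hs₀2⟩ := hs₀
        obtain ⟨p, q, hpq, hp1, hp2, hq1, hq2, hDp, hDq⟩ :=
          extract_partners G hgame hs₀1 hs₀2
        rcases hclass d₁ p hDp hd₁ hp1 (fun hh => hp2 hh.symm) with ⟨hd₁v, hBp⟩ | ⟨hpv, hBd⟩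
        · rcases hclass d₁ q hDq hd₁ hq1 (fun hh => hq2 hh.symm) with ⟨_, hBq⟩ | ⟨hqv, hBd⟩
          · exact ⟨p, q, hBp, hBq, hpq⟩
          · exact absurd (hd₁v ▸ hBd.1) (hd12 hv₁C)
        · rcases hclass d₁ q hDq hd₁ hq1 (fun hh => hq2 hh.symm) with ⟨hd₁v, _⟩ | ⟨hqv, _⟩
          · exact absurd (hd₁v ▸ hBd.1) (hd12 hv₁C)
          · exact absurd (hpv.trans hqv.symm) hpq
    obtain ⟨b, b', hBb, hBb', hbb'⟩ := hB2
    -- now show Dominator wins within 2 on G - xw₁, contradiction with criticality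
    apply hcr x w₁ hw₁a
    set H := G.deleteEdges {s(x, w₁)} with hH
    have hbC := hBb.1
    have hbC' := hBb'.1
    -- dominating pairs in H
    have hPv : ∀ c, UnivIn G C₂ c → Dominating H {v₁, c} := by
      intro c ⟨hcC, hcu⟩ v hv
      simp only [Set.mem_insert_iff, Set.mem_singleton_iff] at hv
      push_neg at hv
      obtain ⟨hv1, hv2⟩ := hv
      by_cases hvx : v = x
      · refine ⟨v₁, Or.inl rfl, ?_⟩
        subst hvx
        exact adj_del hadj (Or.inl hv₁x) (Or.inl (hne12 hv₁C hw₁C))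
      · rcases hmem v hvx with h1 | h1
        · exact absurd (hbig v h1) hv1
        · refine ⟨c, Or.inr rfl, ?_⟩
          exact adj_del (hcu v h1 (fun hh => hv2 hh)) (Or.inl (hC2x hcC)) (Or.inr hvx)
    have hPx : ∀ c, UnivIn G C₂ c → Dominating H {x, c} := by
      intro c ⟨hcC, hcu⟩ v hv
      simp only [Set.mem_insert_iff, Set.mem_singleton_iff] at hv
      push_neg at hv
      obtain ⟨hv1, hv2⟩ := hv
      rcases hmem v hv1 with h1 | h1
      · have := hbig v h1
        subst this
        refine ⟨x, Or.inl rfl, ?_⟩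
        exact adj_del hadj.symm (Or.inr (fun hh => hne12 hv₁C hw₁C hh))
          (Or.inl (fun hh => hC2x hw₁C hh.symm))
      · refine ⟨c, Or.inr rfl, ?_⟩
        exact adj_del (hcu v h1 (fun hh => hv2 hh)) (Or.inl (hC2x hcC)) (Or.inr hv1)
    -- the strategy
    intro s₁
    by_cases h1 : s₁ = v₁
    · subst h1
      refine ⟨x, fun hh => hv₁x hh.symm, Or.inr ?_⟩
      exact two_partner_win H hbb' (hne12 hv₁C hbC).symm (hC2x hbC)
        (hne12 hv₁C hbC').symm (hC2x hbC') (hPx b hBb) (hPx b' hBb')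
    · by_cases h2 : s₁ = x
      · subst h2
        refine ⟨v₁, hv₁x, Or.inr ?_⟩
        exact two_partner_win H hbb' (hC2x hbC) (hne12 hv₁C hbC).symm
          (hC2x hbC') (hne12 hv₁C hbC').symm (hPv b hBb) (hPv b' hBb')
      · -- s₁ ∈ C₂ (or anything else): pick d₁ ∈ {b, b'} distinct from s₁
        have key : ∀ c, UnivIn G C₂ c → c ≠ s₁ → ∃ d₁, d₁ ≠ s₁ ∧
            (Dominating H {d₁} ∨ ∀ s₂ ∉ ({s₁, d₁} : Set V),
              ∃ d₂ ∉ ({s₁, d₁, s₂} : Set V), Dominating H {d₁, d₂}) := by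
          intro c hBc hcs
          refine ⟨c, hcs, Or.inr ?_⟩
          refine two_partner_win H hv₁x (fun hh => h1 hh.symm)
            (hne12 hv₁C hBc.1) (fun hh => h2 hh.symm) (fun hh => hC2x hBc.1 hh.symm)
            (dom_comm (hPv c hBc)) (dom_comm (hPx c hBc))
        by_cases h3 : s₁ = b
        · exact key b' hBb' (fun hh => hbb' (hh ▸ h3).symm)
        · exact key b hBb (fun hh => h3 hh.symm)
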